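/- (Theorem 1: influence of a new sample at the end.) Let m ≥ 1, y ∈ ℝ^m, τ ∈ ℝ^m with τ_i > 0, λ ≥ 0, and let u* be the unique minimizer of F(·, y, τ, λ), with segments N*_1, …, N*_{K*}, segment levels v*_1, …, v*_{K*}, and i^{j}_1 the first index of the j-th segment. Append a new sample: let y⁺ = (y_1, …, y_m, y_{m+1}) ∈ ℝ^{m+1} and τ⁺ = (τ_1, …, τ_m, τ_{m+1}) with τ_{m+1} > 0, and let û be the unique minimizer of F(·, y⁺, τ⁺, λ). If there exists an index j ∈ {2, …, K*} such that sign(v*_{j−1} − v*_j) = sign(v*_{K*} − y_{m+1}), then, taking j to be the largest such index, û_i = u*_i for every i < i^{j}_1. -/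

import Mathlib

/-- The weighted total-variation functional
`F(u, y, τ, λ) = Σ_{i=1}^n τ_i (y_i − u_i)² + λ Σ_{i=1}^{n−1} |u_{i+1} − u_i|`
for a signal with `n + 1` samples (indexed by `Fin (n+1)`, so that the number
of samples is an arbitrary integer `≥ 1`). -/
noncomputable def tvF (n : ℕ) (y τ : Fin (n + 1) → ℝ) (lam : ℝ)
    (u : Fin (n + 1) → ℝ) : ℝ :=
  (∑ i : Fin (n + 1), τ i * (y i - u i) ^ 2) +
    lam * ∑ i : Fin n, |u i.succ - u i.castSucc|

open Finset

noncomputable def tvDataE (m : ℕ) (Y T x : ℕ → ℝ) : ℝ :=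
  ∑ i ∈ range m, T i * (Y i - x i) ^ 2

noncomputable def tvEn (m : ℕ) (Y T : ℕ → ℝ) (lam : ℝ) (x : ℕ → ℝ) : ℝ :=
  tvDataE m Y T x + lam * ∑ i ∈ range (m - 1), |x (i + 1) - x i|

noncomputable def tvEl (m p : ℕ) (Y T : ℕ → ℝ) (lam : ℝ) (x : ℕ → ℝ) : ℝ :=
  tvDataE m Y T x +
    lam * ∑ i ∈ range (m - 1), (if i = p then x (i + 1) - x i else |x (i + 1) - x i|)

lemma tv_submod (a b c d : ℝ) :
    |max a c - max b d| + |min a c - min b d| ≤ |a - b| + |c - d| := by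
  rcases le_total a c with h1 | h1 <;> rcases le_total b d with h2 | h2 <;>
    simp only [max_eq_right h1, min_eq_left h1, max_eq_left h1, min_eq_right h1,
      max_eq_right h2, min_eq_left h2, max_eq_left h2, min_eq_right h2] <;>
    rcases abs_cases (c - d) with ⟨f1, t1⟩ | ⟨f1, t1⟩ <;>
    rcases abs_cases (a - b) with ⟨f2, t2⟩ | ⟨f2, t2⟩ <;>
    rcases abs_cases (c - b) with ⟨f3, t3⟩ | ⟨f3, t3⟩ <;>
    rcases abs_cases (a - d) with ⟨f4, t4⟩ | ⟨f4, t4⟩ <;>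
    try linarith

lemma tv_midpoint (m : ℕ) (Y T : ℕ → ℝ) (hT : ∀ i, 0 < T i)
    (J : (ℕ → ℝ) → ℝ) (U W : ℕ → ℝ)
    (hJ : J (fun k => (U k + W k) / 2) ≤ (J U + J W) / 2)
    (hmin : tvDataE m Y T U + J U ≤
      tvDataE m Y T (fun k => (U k + W k) / 2) + J (fun k => (U k + W k) / 2))
    (heq : tvDataE m Y T W + J W ≤ tvDataE m Y T U + J U) :
    ∀ k < m, W k = U k := by
  have hid : tvDataE m Y T (fun k => (U k + W k) / 2) +
      (∑ i ∈ range m, T i * (W i - U i) ^ 2) / 4 =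
      (tvDataE m Y T U + tvDataE m Y T W) / 2 := by
    unfold tvDataE
    rw [Finset.sum_div, ← Finset.sum_add_distrib, add_div, Finset.sum_div,
      Finset.sum_div, ← Finset.sum_add_distrib]
    apply Finset.sum_congr rfl
    intro i _
    dsimp only
    ring
  have hQ : (∑ i ∈ range m, T i * (W i - U i) ^ 2) ≤ 0 := by linarith
  have hQ0 : ∀ i ∈ range m, T i * (W i - U i) ^ 2 = 0 := by
    rw [← Finset.sum_eq_zero_iff_of_nonneg]
    · exact le_antisymm hQ (Finset.sum_nonneg fun i _ =>
        mul_nonneg (hT i).le (sq_nonneg _))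
    · exact fun i _ => mul_nonneg (hT i).le (sq_nonneg _)
  intro k hk
  have h1 := hQ0 k (Finset.mem_range.mpr hk)
  have hTk := hT k
  have h2 : (W k - U k) ^ 2 = 0 := by
    rcases mul_eq_zero.mp h1 with h | h
    · exact absurd h (ne_of_gt hTk)
    · exact h
  have := sq_eq_zero_iff.mp h2
  linarith [this]

lemma tv_dual (m : ℕ) (Y T : ℕ → ℝ) (hT : ∀ i, 0 < T i) (lam : ℝ) (hlam : 0 ≤ lam)
    (U : ℕ → ℝ) (hU : ∀ x, tvEn m Y T lam U ≤ tvEn m Y T lam x)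
    (p : ℕ) (hp : p < m - 1) :
    |2 * ∑ k ∈ range (p + 1), T k * (U k - Y k)| ≤ lam ∧
    (U p < U (p + 1) → 2 * ∑ k ∈ range (p + 1), T k * (U k - Y k) = lam) ∧
    (U (p + 1) < U p → 2 * ∑ k ∈ range (p + 1), T k * (U k - Y k) = -lam) := by
  set S := ∑ k ∈ range (p + 1), T k * (U k - Y k) with hS
  set A := ∑ k ∈ range (p + 1), T k with hA'
  set d := U (p + 1) - U p with hd
  have hA : 0 < A := Finset.sum_pos (fun i _ => hT i) nonempty_range_add_one
  have hpm' : p + 1 ≤ m := by omega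
  have KEY : ∀ t : ℝ, 0 ≤ t ^ 2 * A + 2 * t * S + lam * (|d - t| - |d|) := by
    intro t
    have h1 := hU (fun k => if k ≤ p then U k + t else U k)
    have hdata : tvDataE m Y T (fun k => if k ≤ p then U k + t else U k) =
        tvDataE m Y T U + (t ^ 2 * A + 2 * t * S) := by
      unfold tvDataE
      have hterm : ∀ i ∈ range m,
          T i * (Y i - (if i ≤ p then U i + t else U i)) ^ 2 =
          T i * (Y i - U i) ^ 2 +
            (if i ≤ p then T i * t ^ 2 + 2 * t * (T i * (U i - Y i)) else 0) := by
        intro i _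
        by_cases h : i ≤ p
        · rw [if_pos h, if_pos h]; ring
        · rw [if_neg h, if_neg h]; ring
      rw [Finset.sum_congr rfl hterm, Finset.sum_add_distrib]
      have hsub : ∑ i ∈ range m,
          (if i ≤ p then T i * t ^ 2 + 2 * t * (T i * (U i - Y i)) else 0) =
          ∑ i ∈ range (p + 1), (T i * t ^ 2 + 2 * t * (T i * (U i - Y i))) := by
        rw [← Finset.sum_subset (Finset.range_subset_range.mpr hpm')]
        · apply Finset.sum_congr rfl
          intro i hi
          have : i ≤ p := by have := Finset.mem_range.mp hi; omega
          rw [if_pos this]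
        · intro i _ hi
          have : ¬ i ≤ p := by
            intro h
            exact hi (Finset.mem_range.mpr (by omega))
          rw [if_neg this]
      rw [hsub, Finset.sum_add_distrib, ← Finset.sum_mul, ← Finset.mul_sum]
      rw [← hS, ← hA']
      ring
    have htv : ∑ i ∈ range (m - 1),
        |(if i + 1 ≤ p then U (i + 1) + t else U (i + 1)) -
          (if i ≤ p then U i + t else U i)| =
        ∑ i ∈ range (m - 1),
          (|U (i + 1) - U i| + if i = p then |d - t| - |d| else 0) := by
      apply Finset.sum_congr rfl
      intro i _
      by_cases h : i = p
      · have h1 : ¬ (i + 1 ≤ p) := by omega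
        have h2 : i ≤ p := by omega
        rw [if_neg h1, if_pos h2, if_pos h, hd, h,
          show U (p + 1) - (U p + t) = U (p + 1) - U p - t from by ring]
        ring
      · rcases Nat.lt_or_ge i p with h2 | h2
        · have e1 : i + 1 ≤ p := h2
          have e2 : i ≤ p := by omega
          rw [if_pos e1, if_pos e2, if_neg h, add_zero,
            show U (i + 1) + t - (U i + t) = U (i + 1) - U i from by ring]
        · have e1 : ¬ (i + 1 ≤ p) := by omega
          have e2 : ¬ (i ≤ p) := by omega
          rw [if_neg e1, if_neg e2, if_neg h, add_zero]
    have hEn : tvEn m Y T lam (fun k => if k ≤ p then U k + t else U k) =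
        tvEn m Y T lam U + (t ^ 2 * A + 2 * t * S + lam * (|d - t| - |d|)) := by
      unfold tvEn
      rw [hdata, htv, Finset.sum_add_distrib, Finset.sum_ite_eq' (range (m - 1)) p
        (fun _ => |d - t| - |d|), if_pos (Finset.mem_range.mpr hp)]
      ring
    rw [hEn] at h1
    linarith
  have habs : |2 * S| ≤ lam := by
    have h2 : ∀ t : ℝ, 0 ≤ t ^ 2 * A + 2 * t * S + lam * |t| := by
      intro t
      have h3 : |d - t| - |d| ≤ |t| := by
        have := abs_sub_abs_le_abs_sub (d - t) d
        simpa using this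
      have h4 : lam * (|d - t| - |d|) ≤ lam * |t| := mul_le_mul_of_nonneg_left h3 hlam
      linarith [KEY t]
    rw [abs_le]
    constructor
    · rw [neg_le]
      apply le_of_forall_pos_le_add
      intro ε hε
      have hr : 0 < ε / A := div_pos hε hA
      have h5 := h2 (ε / A)
      rw [abs_of_pos hr] at h5
      have hrA : ε / A * A = ε := div_mul_cancel₀ _ (ne_of_gt hA)
      nlinarith
    · apply le_of_forall_pos_le_add
      intro ε hε
      have hr : 0 < ε / A := div_pos hε hA
      have h5 := h2 (-(ε / A))
      rw [abs_neg, abs_of_pos hr] at h5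
      have hrA : ε / A * A = ε := div_mul_cancel₀ _ (ne_of_gt hA)
      nlinarith
  refine ⟨habs, ?_, ?_⟩
  · intro hdpos
    have hd0 : 0 < d := by rw [hd]; linarith
    have hle : lam ≤ 2 * S := by
      apply le_of_forall_pos_le_add
      intro ε hε
      set t := min (d / 2) (ε / A) with ht
      have ht0 : 0 < t := lt_min (by linarith) (div_pos hε hA)
      have htd : t ≤ d / 2 := min_le_left _ _
      have h6 := KEY t
      rw [abs_of_pos (show (0:ℝ) < d - t by linarith), abs_of_pos hd0] at h6
      have h8 : 0 ≤ t * A + 2 * S - lam := by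
        by_contra hc
        push_neg at hc
        nlinarith
      have h9 : t * A ≤ ε := by
        have h10 : t ≤ ε / A := min_le_right _ _
        calc t * A ≤ ε / A * A := mul_le_mul_of_nonneg_right h10 hA.le
          _ = ε := div_mul_cancel₀ _ (ne_of_gt hA)
      linarith
    have h := abs_le.mp habs
    linarith [h.1, h.2]
  · intro hdneg
    have hd0 : d < 0 := by rw [hd]; linarith
    have hle : 2 * S ≤ -lam := by
      apply le_of_forall_pos_le_add
      intro ε hε
      set t := max (d / 2) (-(ε / A)) with ht
      have hr : 0 < ε / A := div_pos hε hA
      have ht0 : t < 0 := max_lt (by linarith) (by linarith)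
      have htd : d / 2 ≤ t := le_max_left _ _
      have h6 := KEY t
      rw [abs_of_neg (show d - t < 0 by linarith), abs_of_neg hd0] at h6
      have h8 : t * A + 2 * S + lam ≤ 0 := by
        by_contra hc
        push_neg at hc
        nlinarith
      have h9 : -ε ≤ t * A := by
        have h10 : -(ε / A) ≤ t := le_max_right _ _
        have : -(ε / A) * A ≤ t * A := mul_le_mul_of_nonneg_right h10 hA.le
        have h11 : -(ε / A) * A = -ε := by
          field_simp
        linarith
      linarith
    have h := abs_le.mp habs
    linarith [h.1, h.2]
lemma tv_abs_mid (x y : ℝ) : |(x + y) / 2| ≤ (|x| + |y|) / 2 := by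
  have h := abs_add_le x y
  have h2 : |(x + y) / 2| = |x + y| / 2 := by
    rw [abs_div]
    norm_num
  linarith

lemma tv_mono (m : ℕ) (Y Y' T : ℕ → ℝ) (hT : ∀ i, 0 < T i) (lam : ℝ) (hlam : 0 ≤ lam)
    (U U' : ℕ → ℝ)
    (hU : ∀ x, tvEn m Y T lam U ≤ tvEn m Y T lam x)
    (hU' : ∀ x, tvEn m Y' T lam U' ≤ tvEn m Y' T lam x)
    (hYY : ∀ i < m, Y' i ≤ Y i) :
    ∀ i < m, U' i ≤ U i := by
  set q := fun k => max (U k) (U' k) with hq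
  set p := fun k => min (U k) (U' k) with hp
  have key : tvEn m Y T lam q + tvEn m Y' T lam p ≤
      tvEn m Y T lam U + tvEn m Y' T lam U' := by
    unfold tvEn tvDataE
    have h1 : ∑ i ∈ range m, T i * (Y i - q i) ^ 2 +
        ∑ i ∈ range m, T i * (Y' i - p i) ^ 2 ≤
        ∑ i ∈ range m, T i * (Y i - U i) ^ 2 +
        ∑ i ∈ range m, T i * (Y' i - U' i) ^ 2 := by
      rw [← Finset.sum_add_distrib, ← Finset.sum_add_distrib]
      apply Finset.sum_le_sum
      intro i hi
      have hY := hYY i (Finset.mem_range.mp hi)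
      have hTi := hT i
      rcases le_total (U' i) (U i) with h | h
      · rw [hq, hp]
        dsimp only
        rw [max_eq_left h, min_eq_right h]
      · rw [hq, hp]
        dsimp only
        rw [max_eq_right h, min_eq_left h]
        nlinarith [mul_nonneg (mul_nonneg hTi.le (sub_nonneg.mpr hY)) (sub_nonneg.mpr h)]
    have h2 : ∑ i ∈ range (m - 1), |q (i + 1) - q i| +
        ∑ i ∈ range (m - 1), |p (i + 1) - p i| ≤
        ∑ i ∈ range (m - 1), |U (i + 1) - U i| +
        ∑ i ∈ range (m - 1), |U' (i + 1) - U' i| := by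
      rw [← Finset.sum_add_distrib, ← Finset.sum_add_distrib]
      apply Finset.sum_le_sum
      intro i _
      exact tv_submod (U (i + 1)) (U i) (U' (i + 1)) (U' i)
    have h3 := mul_le_mul_of_nonneg_left h2 hlam
    rw [mul_add, mul_add] at h3
    linarith
  have hple : tvEn m Y' T lam p ≤ tvEn m Y' T lam U' := by
    have := hU q
    linarith
  have hfin : ∀ k < m, p k = U' k := by
    apply tv_midpoint m Y' T hT
      (fun x => lam * ∑ i ∈ range (m - 1), |x (i + 1) - x i|) U' p
    · dsimp only
      rw [← mul_add, mul_div_assoc]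
      apply mul_le_mul_of_nonneg_left _ hlam
      rw [← Finset.sum_add_distrib, Finset.sum_div]
      apply Finset.sum_le_sum
      intro i _
      have := tv_abs_mid (U' (i + 1) - U' i) (p (i + 1) - p i)
      calc |(U' (i + 1) + p (i + 1)) / 2 - (U' i + p i) / 2|
          = |((U' (i + 1) - U' i) + (p (i + 1) - p i)) / 2| := by ring_nf
        _ ≤ (|U' (i + 1) - U' i| + |p (i + 1) - p i|) / 2 := this
    · have := hU' (fun k => (U' k + p k) / 2)
      unfold tvEn at this
      exact this
    · have := hple
      unfold tvEn at this
      exact this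
  intro i hi
  have := hfin i hi
  rw [hp] at this
  dsimp only at this
  exact min_eq_right_iff.mp this

lemma tv_el_eq (m p : ℕ) (Y T : ℕ → ℝ) (lam : ℝ) (z : ℕ → ℝ)
    (hz : 0 ≤ z (p + 1) - z p) : tvEl m p Y T lam z = tvEn m Y T lam z := by
  unfold tvEl tvEn
  congr 2
  apply Finset.sum_congr rfl
  intro i _
  by_cases h : i = p
  · rw [if_pos h, h]
    exact (abs_of_nonneg hz).symm
  · rw [if_neg h]

lemma tv_el_convex (m p : ℕ) (Y T : ℕ → ℝ) (hT : ∀ i, 0 ≤ T i) (lam : ℝ)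
    (hlam : 0 ≤ lam) (u w : ℕ → ℝ) (t : ℝ) (ht0 : 0 ≤ t) (ht1 : t ≤ 1) :
    tvEl m p Y T lam (fun k => (1 - t) * u k + t * w k) ≤
      (1 - t) * tvEl m p Y T lam u + t * tvEl m p Y T lam w := by
  have ht1' : (0:ℝ) ≤ 1 - t := by linarith
  unfold tvEl tvDataE
  have hd : ∑ i ∈ range m, T i * (Y i - ((1 - t) * u i + t * w i)) ^ 2 ≤
      (1 - t) * ∑ i ∈ range m, T i * (Y i - u i) ^ 2 +
      t * ∑ i ∈ range m, T i * (Y i - w i) ^ 2 := by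
    rw [Finset.mul_sum, Finset.mul_sum, ← Finset.sum_add_distrib]
    apply Finset.sum_le_sum
    intro i _
    nlinarith [mul_nonneg (mul_nonneg (hT i) (mul_nonneg ht0 ht1'))
      (sq_nonneg (u i - w i))]
  have htv : (∑ i ∈ range (m - 1),
      (if i = p then ((1 - t) * u (i + 1) + t * w (i + 1)) - ((1 - t) * u i + t * w i)
        else |((1 - t) * u (i + 1) + t * w (i + 1)) - ((1 - t) * u i + t * w i)|)) ≤
      (1 - t) * (∑ i ∈ range (m - 1), (if i = p then u (i + 1) - u i else |u (i + 1) - u i|)) +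
      t * (∑ i ∈ range (m - 1), (if i = p then w (i + 1) - w i else |w (i + 1) - w i|)) := by
    rw [Finset.mul_sum, Finset.mul_sum, ← Finset.sum_add_distrib]
    apply Finset.sum_le_sum
    intro i _
    by_cases h : i = p
    · rw [if_pos h, if_pos h, if_pos h]
      exact le_of_eq (by ring)
    · rw [if_neg h, if_neg h, if_neg h]
      calc |((1 - t) * u (i + 1) + t * w (i + 1)) - ((1 - t) * u i + t * w i)|
          = |(1 - t) * (u (i + 1) - u i) + t * (w (i + 1) - w i)| := by
            rw [show ((1 - t) * u (i + 1) + t * w (i + 1)) - ((1 - t) * u i + t * w i) =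
              (1 - t) * (u (i + 1) - u i) + t * (w (i + 1) - w i) from by ring]
        _ ≤ |(1 - t) * (u (i + 1) - u i)| + |t * (w (i + 1) - w i)| := abs_add_le _ _
        _ = (1 - t) * |u (i + 1) - u i| + t * |w (i + 1) - w i| := by
            rw [abs_mul, abs_mul, abs_of_nonneg ht0, abs_of_nonneg ht1']
  have h3 := mul_le_mul_of_nonneg_left htv hlam
  nlinarith [hd, h3]

lemma tv_lin_min (m p : ℕ) (Y T : ℕ → ℝ) (hT : ∀ i, 0 < T i) (lam : ℝ)
    (hlam : 0 ≤ lam) (U : ℕ → ℝ)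
    (hU : ∀ x, tvEn m Y T lam U ≤ tvEn m Y T lam x)
    (hd : U p < U (p + 1)) :
    ∀ x, tvEl m p Y T lam U ≤ tvEl m p Y T lam x := by
  intro w
  have h4 : tvEl m p Y T lam U = tvEn m Y T lam U := tv_el_eq _ _ _ _ _ _ (by linarith)
  by_cases he : 0 ≤ w (p + 1) - w p
  · rw [h4, tv_el_eq _ _ _ _ _ _ he]
    exact hU w
  · push_neg at he
    set dU := U (p + 1) - U p with hdU'
    set e := w (p + 1) - w p with he'
    have hdU : 0 < dU := by rw [hdU']; linarith
    have hde : 0 < dU - e := by rw [hdU', he']; linarith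
    set t := dU / (2 * (dU - e)) with ht
    have ht0 : 0 < t := div_pos hdU (by linarith)
    have ht1 : t ≤ 1 := by
      rw [ht, div_le_one (by linarith)]
      linarith
    set z := fun k => (1 - t) * U k + t * w k with hz
    have hteq : t * (dU - e) = dU / 2 := by
      rw [ht]
      field_simp
    have hjump : 0 ≤ z (p + 1) - z p := by
      have h5 : z (p + 1) - z p = dU - t * (dU - e) := by
        rw [hz, hdU', he']
        dsimp only
        ring
      rw [h5, hteq]
      linarith
    have h1 : tvEn m Y T lam U ≤ tvEn m Y T lam z := hU z
    have h2 : tvEl m p Y T lam z ≤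
        (1 - t) * tvEl m p Y T lam U + t * tvEl m p Y T lam w :=
      tv_el_convex m p Y T (fun i => (hT i).le) lam hlam U w t ht0.le ht1
    have h3 : tvEl m p Y T lam z = tvEn m Y T lam z := tv_el_eq _ _ _ _ _ _ hjump
    have h6 : t * tvEl m p Y T lam U ≤ t * tvEl m p Y T lam w := by nlinarith
    exact le_of_mul_le_mul_left h6 ht0

lemma tv_el_decomp (m p : ℕ) (hpm : p < m - 1) (Y T : ℕ → ℝ) (lam : ℝ) (x : ℕ → ℝ) :
    tvEl m p Y T lam x =
      ((∑ i ∈ range (p + 1), T i * (Y i - x i) ^ 2) +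
        ∑ i ∈ Ico (p + 1) m, T i * (Y i - x i) ^ 2) +
      lam * (((∑ i ∈ range p, |x (i + 1) - x i|) + (x (p + 1) - x p)) +
        ∑ i ∈ Ico (p + 1) (m - 1), |x (i + 1) - x i|) := by
  unfold tvEl tvDataE
  rw [← Finset.sum_range_add_sum_Ico (fun i => T i * (Y i - x i) ^ 2)
    (show p + 1 ≤ m by omega)]
  congr 1
  rw [← Finset.sum_range_add_sum_Ico
    (fun i => if i = p then x (i + 1) - x i else |x (i + 1) - x i|)
    (show p + 1 ≤ m - 1 by omega), Finset.sum_range_succ, if_pos rfl]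
  have hs : (∑ i ∈ range p, if i = p then x (i + 1) - x i else |x (i + 1) - x i|)
      = ∑ i ∈ range p, |x (i + 1) - x i| := by
    apply Finset.sum_congr rfl
    intro i hi
    rw [if_neg (by have := Finset.mem_range.mp hi; omega)]
  have hs2 : (∑ i ∈ Ico (p + 1) (m - 1),
      if i = p then x (i + 1) - x i else |x (i + 1) - x i|)
      = ∑ i ∈ Ico (p + 1) (m - 1), |x (i + 1) - x i| := by
    apply Finset.sum_congr rfl
    intro i hi
    rw [if_neg (by have := (Finset.mem_Ico.mp hi).1; omega)]
  rw [hs, hs2]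

lemma tv_swap_eq (m1 m2 p : ℕ) (hp1 : p < m1 - 1) (hp2 : p < m2 - 1)
    (Y T Y2 T2 : ℕ → ℝ) (hYa : ∀ k ≤ p, Y2 k = Y k) (hTa : ∀ k ≤ p, T2 k = T k)
    (lam : ℝ) (U V : ℕ → ℝ) :
    tvEl m1 p Y T lam (fun k => if k ≤ p then V k else U k) +
      tvEl m2 p Y2 T2 lam (fun k => if k ≤ p then U k else V k) =
    tvEl m1 p Y T lam U + tvEl m2 p Y2 T2 lam V := by
  have low1 : ∀ z w : ℕ → ℝ, ∑ i ∈ range (p + 1), T i * (Y i - (if i ≤ p then z i else w i)) ^ 2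
      = ∑ i ∈ range (p + 1), T i * (Y i - z i) ^ 2 := by
    intro z w
    apply Finset.sum_congr rfl
    intro i hi
    rw [if_pos (by have := Finset.mem_range.mp hi; omega)]
  have low2 : ∀ z w : ℕ → ℝ, ∑ i ∈ range (p + 1), T2 i * (Y2 i - (if i ≤ p then z i else w i)) ^ 2
      = ∑ i ∈ range (p + 1), T i * (Y i - z i) ^ 2 := by
    intro z w
    apply Finset.sum_congr rfl
    intro i hi
    have hip : i ≤ p := by have := Finset.mem_range.mp hi; omega
    rw [if_pos hip, hYa i hip, hTa i hip]
  have low2' : ∀ z : ℕ → ℝ, ∑ i ∈ range (p + 1), T2 i * (Y2 i - z i) ^ 2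
      = ∑ i ∈ range (p + 1), T i * (Y i - z i) ^ 2 := by
    intro z
    apply Finset.sum_congr rfl
    intro i hi
    have hip : i ≤ p := by have := Finset.mem_range.mp hi; omega
    rw [hYa i hip, hTa i hip]
  have hi1 : ∀ (m : ℕ) (Yv Tv : ℕ → ℝ) (z w : ℕ → ℝ),
      ∑ i ∈ Ico (p + 1) m, Tv i * (Yv i - (if i ≤ p then z i else w i)) ^ 2
      = ∑ i ∈ Ico (p + 1) m, Tv i * (Yv i - w i) ^ 2 := by
    intro mm Yv Tv z w
    apply Finset.sum_congr rfl
    intro i hi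
    rw [if_neg (by have := (Finset.mem_Ico.mp hi).1; omega)]
  have tvlow : ∀ z w : ℕ → ℝ, ∑ i ∈ range p,
      |(if i + 1 ≤ p then z (i + 1) else w (i + 1)) - (if i ≤ p then z i else w i)|
      = ∑ i ∈ range p, |z (i + 1) - z i| := by
    intro z w
    apply Finset.sum_congr rfl
    intro i hi
    have h1 : i + 1 ≤ p := Finset.mem_range.mp hi
    rw [if_pos h1, if_pos (by omega)]
  have tvhi : ∀ (m : ℕ) (z w : ℕ → ℝ), ∑ i ∈ Ico (p + 1) (m - 1),
      |(if i + 1 ≤ p then z (i + 1) else w (i + 1)) - (if i ≤ p then z i else w i)|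
      = ∑ i ∈ Ico (p + 1) (m - 1), |w (i + 1) - w i| := by
    intro mm z w
    apply Finset.sum_congr rfl
    intro i hi
    have h1 := (Finset.mem_Ico.mp hi).1
    rw [if_neg (by omega), if_neg (by omega)]
  rw [tv_el_decomp m1 p hp1, tv_el_decomp m2 p hp2, tv_el_decomp m1 p hp1,
    tv_el_decomp m2 p hp2]
  rw [low1, low2, hi1, hi1, tvlow, tvlow, tvhi, tvhi, low2']
  rw [if_neg (show ¬ (p + 1 ≤ p) by omega), if_pos (le_refl p),
    if_neg (show ¬ (p + 1 ≤ p) by omega), if_pos (le_refl p)]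
  ring

lemma tv_Jl_mid (m p : ℕ) (lam : ℝ) (hlam : 0 ≤ lam) (a b : ℕ → ℝ) :
    lam * ∑ i ∈ range (m - 1), (if i = p then ((a (i + 1) + b (i + 1)) / 2 - (a i + b i) / 2)
      else |(a (i + 1) + b (i + 1)) / 2 - (a i + b i) / 2|) ≤
    (lam * ∑ i ∈ range (m - 1), (if i = p then a (i + 1) - a i else |a (i + 1) - a i|) +
     lam * ∑ i ∈ range (m - 1), (if i = p then b (i + 1) - b i else |b (i + 1) - b i|)) / 2 := by
  rw [← mul_add, mul_div_assoc]
  apply mul_le_mul_of_nonneg_left _ hlam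
  rw [← Finset.sum_add_distrib, Finset.sum_div]
  apply Finset.sum_le_sum
  intro i _
  by_cases h : i = p
  · rw [if_pos h, if_pos h, if_pos h]
    exact le_of_eq (by ring)
  · rw [if_neg h, if_neg h, if_neg h]
    calc |(a (i + 1) + b (i + 1)) / 2 - (a i + b i) / 2|
        = |((a (i + 1) - a i) + (b (i + 1) - b i)) / 2| := by
          rw [show (a (i + 1) + b (i + 1)) / 2 - (a i + b i) / 2 =
            ((a (i + 1) - a i) + (b (i + 1) - b i)) / 2 from by ring]
      _ ≤ (|a (i + 1) - a i| + |b (i + 1) - b i|) / 2 := tv_abs_mid _ _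

lemma tv_el_min_eq_imp (m1 p : ℕ) (Y T : ℕ → ℝ) (hT : ∀ i, 0 < T i)
    (lam : ℝ) (hlam : 0 ≤ lam) (U W : ℕ → ℝ)
    (hU : ∀ x, tvEl m1 p Y T lam U ≤ tvEl m1 p Y T lam x)
    (heq : tvEl m1 p Y T lam W ≤ tvEl m1 p Y T lam U) :
    ∀ k < m1, W k = U k := by
  apply tv_midpoint m1 Y T hT
    (fun x => lam * ∑ i ∈ range (m1 - 1),
      (if i = p then x (i + 1) - x i else |x (i + 1) - x i|)) U W
  · exact tv_Jl_mid m1 p lam hlam U W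
  · have h5 := hU (fun k => (U k + W k) / 2)
    unfold tvEl at h5
    exact h5
  · unfold tvEl at heq
    exact heq

lemma tv_swap_conclude (m1 m2 p : ℕ) (hp1 : p < m1 - 1) (hp2 : p < m2 - 1)
    (Y T Y2 T2 : ℕ → ℝ) (hT : ∀ i, 0 < T i)
    (hYa : ∀ k ≤ p, Y2 k = Y k) (hTa : ∀ k ≤ p, T2 k = T k)
    (lam : ℝ) (hlam : 0 ≤ lam) (U V : ℕ → ℝ)
    (hU : ∀ x, tvEl m1 p Y T lam U ≤ tvEl m1 p Y T lam x)
    (hV : ∀ x, tvEl m2 p Y2 T2 lam V ≤ tvEl m2 p Y2 T2 lam x) :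
    ∀ k ≤ p, V k = U k := by
  have e1 := hU (fun k => if k ≤ p then V k else U k)
  have e2 := hV (fun k => if k ≤ p then U k else V k)
  have eid := tv_swap_eq m1 m2 p hp1 hp2 Y T Y2 T2 hYa hTa lam U V
  have heq : tvEl m1 p Y T lam (fun k => if k ≤ p then V k else U k) ≤
      tvEl m1 p Y T lam U := by linarith only [e1, e2, eid]
  have hWU := tv_el_min_eq_imp m1 p Y T hT lam hlam U
    (fun k => if k ≤ p then V k else U k) hU heq
  intro k hk
  have h2 : (if k ≤ p then V k else U k) = U k := hWU k (by omega)
  rw [if_pos hk] at h2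
  exact h2

lemma tv_en_congr (m : ℕ) (Z Z' S S' x x' : ℕ → ℝ) (lam : ℝ)
    (h : ∀ k < m, Z k = Z' k ∧ S k = S' k ∧ x k = x' k) :
    tvEn m Z S lam x = tvEn m Z' S' lam x' := by
  unfold tvEn tvDataE
  congr 1
  · apply Finset.sum_congr rfl
    intro i hi
    have hi' := Finset.mem_range.mp hi
    rw [(h i hi').1, (h i hi').2.1, (h i hi').2.2]
  · congr 1
    apply Finset.sum_congr rfl
    intro i hi
    have hi' := Finset.mem_range.mp hi
    have h1 : i + 1 < m := by omega
    have h2 : i < m := by omega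
    rw [(h (i + 1) h1).2.2, (h i h2).2.2]

lemma tv_en_split (n : ℕ) (Z S : ℕ → ℝ) (lam : ℝ) (x : ℕ → ℝ) :
    tvEn (n + 2) Z S lam x = tvEn (n + 1) Z S lam x +
      (S (n + 1) * (Z (n + 1) - x (n + 1)) ^ 2 + lam * |x (n + 1) - x n|) := by
  unfold tvEn tvDataE
  rw [show n + 2 - 1 = n + 1 from rfl, show n + 1 - 1 = n from rfl,
    Finset.sum_range_succ (fun i => S i * (Z i - x i) ^ 2) (n + 1),
    Finset.sum_range_succ (fun i => |x (i + 1) - x i|) n]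
  ring

lemma tv_core (n : ℕ) (Y T Y2 T2 : ℕ → ℝ) (hT : ∀ i, 0 < T i) (hT2 : ∀ i, 0 < T2 i)
    (hYa : ∀ k ≤ n, Y2 k = Y k) (hTa : ∀ k ≤ n, T2 k = T k)
    (lam : ℝ) (hlam : 0 ≤ lam)
    (U : ℕ → ℝ) (hU : ∀ x, tvEn (n + 1) Y T lam U ≤ tvEn (n + 1) Y T lam x)
    (Uh : ℕ → ℝ) (hUh : ∀ x, tvEn (n + 2) Y2 T2 lam Uh ≤ tvEn (n + 2) Y2 T2 lam x)
    (a : ℕ) (ha1 : 1 ≤ a) (ha2 : a ≤ n)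
    (hjump : U (a - 1) < U a)
    (hynew : U n < Y2 (n + 1)) :
    ∀ k < a, Uh k = U k := by
  set p := a - 1 with hp
  have hpa : p + 1 = a := by omega
  set Y' := fun k => if k ≤ n then Y k else U n with hY'
  set U' := fun k => if k ≤ n then U k else U n with hU'd
  -- U' minimizes the extended problem with appended sample U n
  have hcong1 : ∀ x : ℕ → ℝ, tvEn (n + 1) Y' T2 lam x = tvEn (n + 1) Y T lam x := by
    intro x
    apply tv_en_congr
    intro k hk
    have hk' : k ≤ n := by omega
    refine ⟨?_, hTa k hk', rfl⟩
    rw [hY']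
    dsimp only
    rw [if_pos hk']
  have hU'min : ∀ x, tvEn (n + 2) Y' T2 lam U' ≤ tvEn (n + 2) Y' T2 lam x := by
    intro x
    rw [tv_en_split, tv_en_split, hcong1, hcong1]
    have h1 : tvEn (n + 1) Y T lam U' = tvEn (n + 1) Y T lam U := by
      apply tv_en_congr
      intro k hk
      refine ⟨rfl, rfl, ?_⟩
      rw [hU'd]
      dsimp only
      rw [if_pos (by omega : k ≤ n)]
    have h2 : U' (n + 1) = U n := by
      rw [hU'd]; dsimp only; rw [if_neg (by omega)]
    have h3 : U' n = U n := by
      rw [hU'd]; dsimp only; rw [if_pos (le_refl n)]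
    have h4 : Y' (n + 1) = U n := by
      rw [hY']; dsimp only; rw [if_neg (by omega)]
    have h5 := hU x
    have h6 : 0 ≤ T2 (n + 1) * (U n - x (n + 1)) ^ 2 :=
      mul_nonneg (hT2 (n + 1)).le (sq_nonneg _)
    have h7 : 0 ≤ lam * |x (n + 1) - x n| := mul_nonneg hlam (abs_nonneg _)
    rw [h1, h2, h3, h4]
    simp only [sub_self, abs_zero, mul_zero]
    have : (0:ℝ) ^ 2 = 0 := by norm_num
    rw [this, mul_zero]
    linarith
  -- monotonicity : U' ≤ Uh
  have hmono : ∀ i < n + 2, U' i ≤ Uh i := by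
    apply tv_mono (n + 2) Y2 Y' T2 hT2 lam hlam Uh U' hUh hU'min
    intro i hi
    rw [hY']
    dsimp only
    by_cases h : i ≤ n
    · rw [if_pos h, ← hYa i h]
    · rw [if_neg h]
      have : i = n + 1 := by omega
      rw [this]
      exact hynew.le
  have hU'p : U' p = U p := by
    rw [hU'd]; dsimp only; rw [if_pos (by omega : p ≤ n)]
  have hU'p1 : U' (p + 1) = U (p + 1) := by
    rw [hU'd]; dsimp only; rw [if_pos (by omega : p + 1 ≤ n)]
  have hjumpp : U p < U (p + 1) := by
    rw [hpa, hp]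
    exact hjump
  have hppn1 : p < (n + 2) - 1 := by omega
  have hppn : p < (n + 1) - 1 := by omega
  -- the new minimizer also jumps up at p
  have hjUh : Uh p < Uh (p + 1) := by
    by_contra hc
    push_neg at hc
    have hdual' := tv_dual (n + 2) Y' T2 hT2 lam hlam U' hU'min p hppn1
    have hsat : 2 * ∑ k ∈ range (p + 1), T2 k * (U' k - Y' k) = lam :=
      hdual'.2.1 (by rw [hU'p, hU'p1]; exact hjumpp)
    have hdual := tv_dual (n + 2) Y2 T2 hT2 lam hlam Uh hUh p hppn1
    have hb := abs_le.mp hdual.1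
    have hsum : ∑ k ∈ range (p + 1), T2 k * (Uh k - Y2 k) ≤
        ∑ k ∈ range (p + 1), T2 k * (U' k - Y' k) := by linarith [hb.2]
    have hYY' : ∀ k ∈ range (p + 1), T2 k * (U' k - Y' k) = T2 k * (U' k - Y2 k) := by
      intro k hk
      have hk' : k ≤ n := by have := Finset.mem_range.mp hk; omega
      rw [hY']
      dsimp only
      rw [if_pos hk', hYa k hk']
    rw [Finset.sum_congr rfl hYY'] at hsum
    have hdiff : ∑ k ∈ range (p + 1), T2 k * (Uh k - U' k) ≤ 0 := by
      have : ∑ k ∈ range (p + 1), T2 k * (Uh k - U' k) =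
          ∑ k ∈ range (p + 1), T2 k * (Uh k - Y2 k) -
          ∑ k ∈ range (p + 1), T2 k * (U' k - Y2 k) := by
        rw [← Finset.sum_sub_distrib]
        apply Finset.sum_congr rfl
        intro k _
        ring
      linarith [this]
    have hz : ∀ k ∈ range (p + 1), T2 k * (Uh k - U' k) = 0 := by
      rw [← Finset.sum_eq_zero_iff_of_nonneg]
      · apply le_antisymm hdiff
        apply Finset.sum_nonneg
        intro k hk
        have := hmono k (by have := Finset.mem_range.mp hk; omega)
        exact mul_nonneg (hT2 k).le (by linarith)
      · intro k hk
        have := hmono k (by have := Finset.mem_range.mp hk; omega)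
        exact mul_nonneg (hT2 k).le (by linarith)
    have hzp := hz p (Finset.mem_range.mpr (by omega))
    have hUhp : Uh p = U' p := by
      have hTp := hT2 p
      rcases mul_eq_zero.mp hzp with h | h
      · exact absurd h (ne_of_gt hTp)
      · linarith [sub_eq_zero.mp h]
    have hm1 := hmono (p + 1) (by omega)
    rw [hU'p, hU'p1] at *
    linarith
  -- linearized minimality on both problems, swap, conclude
  have hlinU := tv_lin_min (n + 1) p Y T hT lam hlam U hU hjumpp
  have hlinUh := tv_lin_min (n + 2) p Y2 T2 hT2 lam hlam Uh hUh hjUh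
  have hconc := tv_swap_conclude (n + 1) (n + 2) p hppn hppn1 Y T Y2 T2 hT
    (fun k hk => hYa k (by omega)) (fun k hk => hTa k (by omega)) lam hlam U Uh
    hlinU hlinUh
  intro k hk
  exact hconc k (by omega)

noncomputable def tvLift (n : ℕ) (f : Fin (n + 1) → ℝ) : ℕ → ℝ :=
  fun i => f ⟨min i n, by omega⟩

lemma tvLift_eq (n : ℕ) (f : Fin (n + 1) → ℝ) (k : ℕ) (hk : k ≤ n) :
    tvLift n f k = f ⟨k, by omega⟩ := by
  unfold tvLift
  congr 1
  exact Fin.ext (by simp [Nat.min_eq_left hk])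

lemma tv_bridge (n : ℕ) (y τ : Fin (n + 1) → ℝ) (lam : ℝ) (x : ℕ → ℝ) :
    tvEn (n + 1) (tvLift n y) (tvLift n τ) lam x =
      tvF n y τ lam (fun i => x i.val) := by
  unfold tvEn tvDataE tvF
  congr 1
  · rw [← Fin.sum_univ_eq_sum_range
      (fun k => tvLift n τ k * (tvLift n y k - x k) ^ 2) (n + 1)]
    apply Finset.sum_congr rfl
    intro i _
    rw [tvLift_eq n τ _ (by omega), tvLift_eq n y _ (by omega)]
  · congr 1
    rw [show n + 1 - 1 = n from rfl,
      ← Fin.sum_univ_eq_sum_range (fun k => |x (k + 1) - x k|) n]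
    apply Finset.sum_congr rfl
    intro i _
    simp [Fin.val_succ, Fin.coe_castSucc]

lemma tv_en_neg (m : ℕ) (Y T : ℕ → ℝ) (lam : ℝ) (x : ℕ → ℝ) :
    tvEn m (fun k => -Y k) T lam x = tvEn m Y T lam (fun k => -x k) := by
  unfold tvEn tvDataE
  congr 1
  · apply Finset.sum_congr rfl
    intro i _
    ring
  · congr 1
    apply Finset.sum_congr rfl
    intro i _
    rw [show -x (i + 1) - -x i = -(x (i + 1) - x i) from by ring, abs_neg]

lemma tv_sign_neg_lt (x : ℝ) (h : Real.sign x = -1) : x < 0 := by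
  rcases lt_trichotomy x 0 with h1 | h1 | h1
  · exact h1
  · rw [h1, Real.sign_zero] at h; norm_num at h
  · rw [Real.sign_of_pos h1] at h; norm_num at h

lemma tv_sign_pos_lt (x : ℝ) (h : Real.sign x = 1) : 0 < x := by
  rcases lt_trichotomy x 0 with h1 | h1 | h1
  · rw [Real.sign_of_neg h1] at h; norm_num at h
  · rw [h1, Real.sign_zero] at h; norm_num at h
  · exact h1

/-- **Theorem 1 (influence of a new sample at the end).**
The `m = n+1` samples are `y τ : Fin (n+1) → ℝ` and `u` is the unique minimizer of
`F(·, y, τ, λ)`.  Its segment structure is given by `K` (number of segments), the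
strictly increasing boundary function `start : Fin (K+1) → Fin (n+2)` (the `j`-th
segment, `j : Fin K`, consists of the sample indices `i` with
`start j.castSucc ≤ i < start j.succ`, so `start j.castSucc` is the first index
`i^j_1` of segment `j`), and the segment levels `v : Fin K → ℝ` (with adjacent
levels distinct, by maximality).  A new sample `(ynew, τnew)` with `τnew > 0` is
appended, and `uh` is the unique minimizer of the extended problem.  If there is a
segment index `j ≥ 1` (0-based; `j ∈ {2,…,K}` in 1-based notation) with
`sign(v_{j−1} − v_j) = sign(v_{K−1} − ynew)` and `j` is the largest such index,
then `uh` agrees with `u` at every sample index `i` before the first index of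
segment `j`. -/
theorem tv_new_sample_influence (n : ℕ) (y τ : Fin (n + 1) → ℝ)
    (hτ : ∀ i, 0 < τ i) (lam : ℝ) (hlam : 0 ≤ lam)
    (u : Fin (n + 1) → ℝ)
    (hu : ∀ w : Fin (n + 1) → ℝ, tvF n y τ lam u ≤ tvF n y τ lam w)
    (K : ℕ) (hK : 0 < K)
    (start : Fin (K + 1) → Fin (n + 2)) (hmono : StrictMono start)
    (hstart0 : start 0 = 0) (hstartlast : start (Fin.last K) = Fin.last (n + 1))
    (v : Fin K → ℝ)
    (hseg : ∀ (j : Fin K) (i : ℕ), (start j.castSucc : ℕ) ≤ i →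
      ∀ hi : i < (start j.succ : ℕ),
        u ⟨i, by have := (start j.succ).isLt; omega⟩ = v j)
    (hmax : ∀ (j : ℕ) (hj : j + 1 < K), v ⟨j, by omega⟩ ≠ v ⟨j + 1, hj⟩)
    (ynew τnew : ℝ) (hτnew : 0 < τnew)
    (uh : Fin (n + 2) → ℝ)
    (huh : ∀ w : Fin (n + 2) → ℝ,
      tvF (n + 1) (Fin.snoc y ynew) (Fin.snoc τ τnew) lam uh ≤
        tvF (n + 1) (Fin.snoc y ynew) (Fin.snoc τ τnew) lam w)
    (j : Fin K) (hj1 : 1 ≤ (j : ℕ))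
    (hsign : Real.sign (v ⟨(j : ℕ) - 1, by have := j.isLt; omega⟩ - v j) =
      Real.sign (v ⟨K - 1, by omega⟩ - ynew))
    (hjmax : ∀ j' : Fin K, 1 ≤ (j' : ℕ) →
      Real.sign (v ⟨(j' : ℕ) - 1, by have := j'.isLt; omega⟩ - v j') =
        Real.sign (v ⟨K - 1, by omega⟩ - ynew) → j' ≤ j) :
    ∀ i : ℕ, ∀ hi : i < (start j.castSucc : ℕ),
      uh ⟨i, by have := (start j.castSucc).isLt; omega⟩ =
        u ⟨i, by have := (start j.castSucc).isLt; omega⟩ := by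
  have hjK : (j : ℕ) < K := j.isLt
  set a := (start j.castSucc : ℕ) with haa
  -- basic index bounds
  have ha1 : 1 ≤ a := by
    have h0 : start 0 < start j.castSucc := by
      apply hmono
      rw [Fin.lt_def]
      simpa using (by omega : 0 < (j : ℕ))
    rw [hstart0] at h0
    have h2 : (0 : Fin (n + 2)).val < (start j.castSucc).val := h0
    show 1 ≤ (start j.castSucc).val
    rw [Fin.val_zero] at h2
    omega
  have ha2 : a ≤ n := by
    have h0 := hmono (Fin.castSucc_lt_last j)
    rw [hstartlast] at h0
    have h2 : (start j.castSucc).val < (Fin.last (n + 1)).val := h0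
    simp [Fin.val_last] at h2
    omega
  -- segment values
  have hj'lt : (j : ℕ) - 1 < K := by omega
  set j' : Fin K := ⟨(j : ℕ) - 1, hj'lt⟩ with hj'd
  have hsucc_eq : j'.succ = j.castSucc := by
    apply Fin.ext
    simp [hj'd]
    omega
  have hua : u ⟨a, by omega⟩ = v j := by
    have hlt : a < (start j.succ : ℕ) := hmono j.castSucc_lt_succ
    exact hseg j a (le_refl _) hlt
  have hua1 : u ⟨a - 1, by omega⟩ = v j' := by
    have h1 : (start j'.castSucc : ℕ) < a := by
      have h2 := hmono j'.castSucc_lt_succ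
      rw [hsucc_eq] at h2
      exact h2
    have h2 : a - 1 < (start j'.succ : ℕ) := by rw [hsucc_eq]; omega
    exact hseg j' (a - 1) (by omega) h2
  have hKlt : K - 1 < K := by omega
  set jl : Fin K := ⟨K - 1, hKlt⟩ with hjld
  have hun : u ⟨n, by omega⟩ = v jl := by
    have hlast : jl.succ = Fin.last K := by
      apply Fin.ext
      simp [hjld]
      omega
    have h2 : n < (start jl.succ : ℕ) := by
      rw [hlast, hstartlast]
      simp
    have h1 : (start jl.castSucc : ℕ) ≤ n := by
      have h3 := hmono jl.castSucc_lt_succ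
      rw [hlast, hstartlast] at h3
      have h4 : (start jl.castSucc).val < (Fin.last (n + 1)).val := h3
      simp [Fin.val_last] at h4
      omega
    exact hseg jl n h1 h2
  have hne : v j' ≠ v j := by
    have hj2 : (⟨(j : ℕ) - 1 + 1, by omega⟩ : Fin K) = j := by
      apply Fin.ext
      simp
      omega
    have hne0 := hmax ((j : ℕ) - 1) (by omega)
    rw [← hj2]
    exact hne0
  have hsign2 : Real.sign (v j' - v j) = Real.sign (v jl - ynew) := hsign
  -- snoc positivity
  have hsnocτ : ∀ idx : Fin (n + 2), 0 < (Fin.snoc τ τnew : Fin (n + 2) → ℝ) idx := by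
    intro idx
    refine Fin.lastCases (motive := fun w => 0 < (Fin.snoc τ τnew : Fin (n + 2) → ℝ) w) ?_ ?_ idx
    · simp only [Fin.snoc_last]; exact hτnew
    · intro i; simp only [Fin.snoc_castSucc]; exact hτ i
  have hT : ∀ i, 0 < tvLift n τ i := fun i => hτ _
  have hT2 : ∀ i, 0 < tvLift (n + 1) (Fin.snoc τ τnew) i := fun i => hsnocτ _
  -- data agreement
  have hYa : ∀ k ≤ n, tvLift (n + 1) (Fin.snoc y ynew) k = tvLift n y k := by
    intro k hk
    rw [tvLift_eq (n + 1) _ k (by omega), tvLift_eq n y k hk]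
    have he : (⟨k, by omega⟩ : Fin (n + 2)) = Fin.castSucc ⟨k, by omega⟩ := rfl
    rw [he, Fin.snoc_castSucc]
  have hTa : ∀ k ≤ n, tvLift (n + 1) (Fin.snoc τ τnew) k = tvLift n τ k := by
    intro k hk
    rw [tvLift_eq (n + 1) _ k (by omega), tvLift_eq n τ k hk]
    have he : (⟨k, by omega⟩ : Fin (n + 2)) = Fin.castSucc ⟨k, by omega⟩ := rfl
    rw [he, Fin.snoc_castSucc]
  have hY2last : tvLift (n + 1) (Fin.snoc y ynew) (n + 1) = ynew := by
    rw [tvLift_eq (n + 1) _ (n + 1) (le_refl _)]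
    exact Fin.snoc_last _ _
  -- minimality transfer
  have hUmin : ∀ x : ℕ → ℝ, tvEn (n + 1) (tvLift n y) (tvLift n τ) lam (tvLift n u) ≤
      tvEn (n + 1) (tvLift n y) (tvLift n τ) lam x := by
    intro x
    have hUu : (fun i : Fin (n + 1) => tvLift n u i.val) = u := by
      funext i
      rw [tvLift_eq n u _ (by omega)]
    calc tvEn (n + 1) (tvLift n y) (tvLift n τ) lam (tvLift n u)
        = tvF n y τ lam (fun i => tvLift n u i.val) := tv_bridge n y τ lam _
      _ = tvF n y τ lam u := by rw [hUu]
      _ ≤ tvF n y τ lam (fun i => x i.val) := hu _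
      _ = tvEn (n + 1) (tvLift n y) (tvLift n τ) lam x := (tv_bridge n y τ lam x).symm
  have hUhmin : ∀ x : ℕ → ℝ,
      tvEn (n + 2) (tvLift (n + 1) (Fin.snoc y ynew)) (tvLift (n + 1) (Fin.snoc τ τnew))
        lam (tvLift (n + 1) uh) ≤
      tvEn (n + 2) (tvLift (n + 1) (Fin.snoc y ynew)) (tvLift (n + 1) (Fin.snoc τ τnew))
        lam x := by
    intro x
    have hUu : (fun i : Fin (n + 2) => tvLift (n + 1) uh i.val) = uh := by
      funext i
      rw [tvLift_eq (n + 1) uh _ (by omega)]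
    calc tvEn (n + 2) (tvLift (n + 1) (Fin.snoc y ynew)) (tvLift (n + 1) (Fin.snoc τ τnew))
          lam (tvLift (n + 1) uh)
        = tvF (n + 1) (Fin.snoc y ynew) (Fin.snoc τ τnew) lam
            (fun i => tvLift (n + 1) uh i.val) := tv_bridge (n + 1) _ _ lam _
      _ = tvF (n + 1) (Fin.snoc y ynew) (Fin.snoc τ τnew) lam uh := by rw [hUu]
      _ ≤ tvF (n + 1) (Fin.snoc y ynew) (Fin.snoc τ τnew) lam (fun i => x i.val) := huh _
      _ = tvEn (n + 2) (tvLift (n + 1) (Fin.snoc y ynew)) (tvLift (n + 1) (Fin.snoc τ τnew))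
            lam x := (tv_bridge (n + 1) _ _ lam x).symm
  -- value identifications
  have eUa : tvLift n u a = v j := by
    rw [tvLift_eq n u a (by omega)]
    exact hua
  have eUa1 : tvLift n u (a - 1) = v j' := by
    rw [tvLift_eq n u (a - 1) (by omega)]
    exact hua1
  have eUn : tvLift n u n = v jl := by
    rw [tvLift_eq n u n (le_refl _)]
    exact hun
  -- main case split
  rcases lt_trichotomy (v j') (v j) with hlt | heq2 | hgt
  · -- upward jump, ynew above the last level
    have h1 : Real.sign (v j' - v j) = -1 := Real.sign_of_neg (by linarith)
    have h2 : v jl < ynew := by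
      have h3 := tv_sign_neg_lt _ (hsign2 ▸ h1 : Real.sign (v jl - ynew) = -1)
      linarith
    have hconc := tv_core n (tvLift n y) (tvLift n τ)
      (tvLift (n + 1) (Fin.snoc y ynew)) (tvLift (n + 1) (Fin.snoc τ τnew))
      hT hT2 hYa hTa lam hlam (tvLift n u) hUmin (tvLift (n + 1) uh) hUhmin
      a ha1 ha2 (by rw [eUa1, eUa]; exact hlt) (by rw [eUn, hY2last]; exact h2)
    intro i hi
    have h := hconc i hi
    rw [tvLift_eq (n + 1) uh i (by omega), tvLift_eq n u i (by omega)] at h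
    exact h
  · exact absurd heq2 hne
  · -- downward jump: apply the core lemma to the negated data
    have h1 : Real.sign (v j' - v j) = 1 := Real.sign_of_pos (by linarith)
    have h2 : ynew < v jl := by
      have h3 := tv_sign_pos_lt _ (hsign2 ▸ h1 : Real.sign (v jl - ynew) = 1)
      linarith
    have hUminN : ∀ x : ℕ → ℝ,
        tvEn (n + 1) (fun k => -(tvLift n y k)) (tvLift n τ) lam (fun k => -(tvLift n u k)) ≤
        tvEn (n + 1) (fun k => -(tvLift n y k)) (tvLift n τ) lam x := by
      intro x
      calc tvEn (n + 1) (fun k => -(tvLift n y k)) (tvLift n τ) lam (fun k => -(tvLift n u k))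
          = tvEn (n + 1) (tvLift n y) (tvLift n τ) lam (fun k => -(-(tvLift n u k))) :=
            tv_en_neg (n + 1) (tvLift n y) (tvLift n τ) lam _
        _ = tvEn (n + 1) (tvLift n y) (tvLift n τ) lam (tvLift n u) := by
            apply tv_en_congr
            intro k _
            exact ⟨rfl, rfl, neg_neg _⟩
        _ ≤ tvEn (n + 1) (tvLift n y) (tvLift n τ) lam (fun k => -x k) := hUmin _
        _ = tvEn (n + 1) (fun k => -(tvLift n y k)) (tvLift n τ) lam x :=
            (tv_en_neg (n + 1) (tvLift n y) (tvLift n τ) lam x).symm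
    have hUhminN : ∀ x : ℕ → ℝ,
        tvEn (n + 2) (fun k => -(tvLift (n + 1) (Fin.snoc y ynew) k))
          (tvLift (n + 1) (Fin.snoc τ τnew)) lam (fun k => -(tvLift (n + 1) uh k)) ≤
        tvEn (n + 2) (fun k => -(tvLift (n + 1) (Fin.snoc y ynew) k))
          (tvLift (n + 1) (Fin.snoc τ τnew)) lam x := by
      intro x
      calc tvEn (n + 2) (fun k => -(tvLift (n + 1) (Fin.snoc y ynew) k))
            (tvLift (n + 1) (Fin.snoc τ τnew)) lam (fun k => -(tvLift (n + 1) uh k))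
          = tvEn (n + 2) (tvLift (n + 1) (Fin.snoc y ynew))
              (tvLift (n + 1) (Fin.snoc τ τnew)) lam
              (fun k => -(-(tvLift (n + 1) uh k))) := tv_en_neg (n + 2) _ _ lam _
        _ = tvEn (n + 2) (tvLift (n + 1) (Fin.snoc y ynew))
              (tvLift (n + 1) (Fin.snoc τ τnew)) lam (tvLift (n + 1) uh) := by
            apply tv_en_congr
            intro k _
            exact ⟨rfl, rfl, neg_neg _⟩
        _ ≤ tvEn (n + 2) (tvLift (n + 1) (Fin.snoc y ynew))
              (tvLift (n + 1) (Fin.snoc τ τnew)) lam (fun k => -x k) := hUhmin _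
        _ = tvEn (n + 2) (fun k => -(tvLift (n + 1) (Fin.snoc y ynew) k))
              (tvLift (n + 1) (Fin.snoc τ τnew)) lam x :=
            (tv_en_neg (n + 2) _ _ lam x).symm
    have hYaN : ∀ k ≤ n, (fun k => -(tvLift (n + 1) (Fin.snoc y ynew) k)) k =
        (fun k => -(tvLift n y k)) k := by
      intro k hk
      dsimp only
      rw [hYa k hk]
    have hconc := tv_core n (fun k => -(tvLift n y k)) (tvLift n τ)
      (fun k => -(tvLift (n + 1) (Fin.snoc y ynew) k)) (tvLift (n + 1) (Fin.snoc τ τnew))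
      hT hT2 hYaN hTa lam hlam (fun k => -(tvLift n u k)) hUminN
      (fun k => -(tvLift (n + 1) uh k)) hUhminN
      a ha1 ha2
      (by rw [eUa1, eUa]; linarith)
      (by rw [eUn, hY2last]; linarith)
    intro i hi
    have h := hconc i hi
    have h2' := neg_injective h
    rw [tvLift_eq (n + 1) uh i (by omega), tvLift_eq n u i (by omega)] at h2'
    exact h2'
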